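/- Let d ≥ 1, κ ∈ (0,1) and a, b > 0. Then there exists c > 0, depending only on a, b, d and κ, such that the following holds. Let Ω ⊆ ℝ^d be Lebesgue measurable, let t > 0, and let K : Ω×Ω → ℂ be measurable with |K(x,y)| ≤ a t^{−d/2} e^{−b|x−y|²/t} for all x, y ∈ Ω, and |K(x+h,y) − K(x,y)| ≤ a t^{−d/2} (|h|/√t)^κ e^{−b|x−y|²/t} for all x, y ∈ Ω and h ∈ ℝ^d with x+h ∈ Ω and |h| ≤ √t. Then for all ν ∈ (0,κ], p ∈ [1,∞], u ∈ L_p(Ω) and x, x' ∈ Ω, the function (T u)(x) = ∫_Ω K(x,y) u(y) dy satisfies |(T u)(x) − (T u)(x')| ≤ c · t^{−d/(2p)} t^{−ν/2} |x−x'|^ν ‖u‖_{L_p(Ω)}. -/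

import Mathlib

open MeasureTheory Metric ENNReal Real

lemma gauss_lint {β : ℝ} (hβ : 0 < β) (d : ℕ) (x : EuclideanSpace ℝ (Fin d)) :
    ∫⁻ y, ENNReal.ofReal (Real.exp (-β * dist x y ^ 2)) ∂(volume) =
      ENNReal.ofReal ((π / β) ^ ((d : ℝ) / 2)) := by
  have hint : Integrable (fun v : EuclideanSpace ℝ (Fin d) => Real.exp (-β * ‖v‖ ^ 2)) := by
    have := GaussianFourier.integrable_cexp_neg_mul_sq_norm_add (V := EuclideanSpace ℝ (Fin d))
      (b := (β : ℂ)) (by simpa using hβ) 0 0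
    have h2 := this.norm
    simpa [Complex.norm_exp, neg_mul, ← Complex.ofReal_pow, Complex.ofReal_re] using h2
  have hint2 : Integrable (fun y : EuclideanSpace ℝ (Fin d) => Real.exp (-β * ‖x - y‖ ^ 2)) :=
    hint.comp_sub_left x
  rw [show (fun y : EuclideanSpace ℝ (Fin d) => ENNReal.ofReal (Real.exp (-β * dist x y ^ 2)))
      = fun y => ENNReal.ofReal (Real.exp (-β * ‖x - y‖ ^ 2)) by
    funext y; rw [dist_eq_norm]]
  rw [← ofReal_integral_eq_lintegral_ofReal hint2 (Filter.Eventually.of_forall fun y => (Real.exp_pos _).le)]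
  congr 1
  rw [show (∫ y : EuclideanSpace ℝ (Fin d), Real.exp (-β * ‖x - y‖ ^ 2))
      = ∫ y : EuclideanSpace ℝ (Fin d), Real.exp (-β * ‖y‖ ^ 2) from
    integral_sub_left_eq_self (fun y => Real.exp (-β * ‖y‖ ^ 2)) volume x]
  rw [GaussianFourier.integral_rexp_neg_mul_sq_norm hβ]
  congr 1
  simp [finrank_euclideanSpace_fin]


lemma const_bound {b : ℝ} (hb : 0 < b) (d : ℕ) {r' : ℝ} (hr' : 1 ≤ r') :
    (π / (b * r')) ^ ((d : ℝ) / (2 * r')) ≤ max 1 ((π / b) ^ ((d : ℝ) / 2)) := by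
  have hr'0 : 0 < r' := lt_of_lt_of_le one_pos hr'
  have hz : 0 < π / (b * r') := div_pos Real.pi_pos (by positivity)
  have hle : π / (b * r') ≤ π / b := by
    apply div_le_div_of_nonneg_left Real.pi_pos.le hb
    nlinarith
  have hexp : (d : ℝ) / (2 * r') ≤ (d : ℝ) / 2 := by
    apply div_le_div_of_nonneg_left (by positivity) (by norm_num)
    nlinarith
  rcases le_or_gt (π / (b * r')) 1 with h | h
  · exact le_trans (Real.rpow_le_one hz.le h (by positivity)) (le_max_left _ _)
  · refine le_trans ?_ (le_max_right _ _)
    calc (π / (b * r')) ^ ((d : ℝ) / (2 * r'))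
        ≤ (π / (b * r')) ^ ((d : ℝ) / 2) := Real.rpow_le_rpow_of_exponent_le h.le hexp
      _ ≤ (π / b) ^ ((d : ℝ) / 2) := Real.rpow_le_rpow hz.le hle (by positivity)

lemma key_lemma (d : ℕ) {b t : ℝ} (hb : 0 < b) (ht : 0 < t)
    (Ω : Set (EuclideanSpace ℝ (Fin d))) (p : ℝ≥0∞) (hp : 1 ≤ p)
    {u : EuclideanSpace ℝ (Fin d) → ℂ}
    (hu : AEStronglyMeasurable u (volume.restrict Ω)) (x : EuclideanSpace ℝ (Fin d)) :
    ∫⁻ y in Ω, ENNReal.ofReal (Real.exp (-b * dist x y ^ 2 / t)) * ‖u y‖₊ ∂volume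
      ≤ ENNReal.ofReal (max 1 ((π / b) ^ ((d : ℝ) / 2)) *
          t ^ ((d : ℝ) / 2 - (d : ℝ) / (2 * p.toReal))) *
        eLpNorm u p (volume.restrict Ω) := by
  set M : ℝ := max 1 ((π / b) ^ ((d : ℝ) / 2)) with hM
  have hM1 : (1 : ℝ) ≤ M := le_max_left _ _
  have hg_meas : Measurable (fun y : EuclideanSpace ℝ (Fin d) =>
      ENNReal.ofReal (Real.exp (-b * dist x y ^ 2 / t))) := by
    fun_prop
  by_cases hptop : p = ⊤
  · subst hptop
    have hN : ∀ᵐ y ∂(volume.restrict Ω), (‖u y‖₊ : ℝ≥0∞) ≤ eLpNormEssSup u (volume.restrict Ω) :=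
      ae_le_eLpNormEssSup
    calc ∫⁻ y in Ω, ENNReal.ofReal (Real.exp (-b * dist x y ^ 2 / t)) * ‖u y‖₊ ∂volume
        ≤ ∫⁻ y in Ω, ENNReal.ofReal (Real.exp (-b * dist x y ^ 2 / t)) *
            eLpNormEssSup u (volume.restrict Ω) ∂volume :=
          lintegral_mono_ae (hN.mono fun y hy => mul_le_mul_right hy _)
      _ = (∫⁻ y in Ω, ENNReal.ofReal (Real.exp (-b * dist x y ^ 2 / t)) ∂volume) *
            eLpNormEssSup u (volume.restrict Ω) := lintegral_mul_const _ hg_meas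
      _ ≤ ENNReal.ofReal (M * t ^ ((d : ℝ) / 2 - (d : ℝ) / (2 * (⊤ : ℝ≥0∞).toReal))) *
            eLpNorm u ⊤ (volume.restrict Ω) := by
          rw [eLpNorm_exponent_top]
          refine mul_le_mul_left ?_ _
          calc (∫⁻ y in Ω, ENNReal.ofReal (Real.exp (-b * dist x y ^ 2 / t)) ∂volume)
              ≤ ∫⁻ y, ENNReal.ofReal (Real.exp (-b * dist x y ^ 2 / t)) ∂volume :=
                setLIntegral_le_lintegral _ _
            _ = ENNReal.ofReal ((π / (b / t)) ^ ((d : ℝ) / 2)) := by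
                rw [show (fun y : EuclideanSpace ℝ (Fin d) =>
                    ENNReal.ofReal (Real.exp (-b * dist x y ^ 2 / t)))
                    = fun y => ENNReal.ofReal (Real.exp (-(b / t) * dist x y ^ 2)) by
                  funext y; ring_nf]
                exact gauss_lint (div_pos hb ht) d x
            _ ≤ ENNReal.ofReal (M * t ^ ((d : ℝ) / 2 - (d : ℝ) / (2 * (⊤ : ℝ≥0∞).toReal))) := by
                apply ENNReal.ofReal_le_ofReal
                rw [show π / (b / t) = (π / b) * t by field_simp]
                rw [Real.mul_rpow (by positivity) ht.le]
                norm_num [ENNReal.toReal_top]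
                exact mul_le_mul_of_nonneg_right (le_max_right _ _) (by positivity)
  · by_cases hp1 : p = 1
    · subst hp1
      calc ∫⁻ y in Ω, ENNReal.ofReal (Real.exp (-b * dist x y ^ 2 / t)) * ‖u y‖₊ ∂volume
          ≤ ∫⁻ y in Ω, ‖u y‖₊ ∂volume := by
            refine lintegral_mono fun y => ?_
            calc ENNReal.ofReal (Real.exp (-b * dist x y ^ 2 / t)) * ‖u y‖₊
                ≤ 1 * ‖u y‖₊ := by
                  refine mul_le_mul_left ?_ _
                  refine ENNReal.ofReal_le_one.2 (Real.exp_le_one_iff.2 ?_)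
                  apply div_nonpos_of_nonpos_of_nonneg _ ht.le
                  nlinarith [sq_nonneg (dist x y)]
              _ = ‖u y‖₊ := one_mul _
        _ = eLpNorm u 1 (volume.restrict Ω) := (eLpNorm_one_eq_lintegral_enorm (f := u) (μ := volume.restrict Ω)).symm
        _ ≤ ENNReal.ofReal (M * t ^ ((d : ℝ) / 2 - (d : ℝ) / (2 * (1 : ℝ≥0∞).toReal))) *
              eLpNorm u 1 (volume.restrict Ω) := by
            nth_rewrite 1 [← one_mul (eLpNorm u 1 (volume.restrict Ω))]
            refine mul_le_mul_left ?_ _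
            norm_num [ENNReal.toReal_one]
            exact hM1
    · have h1p : 1 < p := lt_of_le_of_ne hp (Ne.symm hp1)
      have hr : 1 < p.toReal := by
        rw [← ENNReal.toReal_one]
        exact (ENNReal.toReal_lt_toReal (by simp) hptop).2 h1p
      set r := p.toReal with hrdef
      set r' := Real.conjExponent r with hr'def
      have hconj : r.HolderConjugate r' := Real.HolderConjugate.conjExponent hr
      have hr'1 : 1 ≤ r' := hconj.symm.lt.le
      have hr'0 : 0 < r' := hconj.symm.pos
      have hr0 : 0 < r := hconj.pos
      have hβ : 0 < b * r' / t := by positivity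
      have hexp_eq : (d : ℝ) / (2 * r') = (d : ℝ) / 2 - (d : ℝ) / (2 * r) := by
        have h1 : 1 / r' = 1 - 1 / r := by
          have h := hconj.inv_add_inv_eq_one
          rw [one_div, one_div]; linarith
        calc (d : ℝ) / (2 * r') = (d / 2) * (1 / r') := by ring
          _ = ((d : ℝ) / 2) * (1 - 1 / r) := by rw [h1]
          _ = (d : ℝ) / 2 - (d : ℝ) / (2 * r) := by ring
      have H := ENNReal.lintegral_mul_le_Lp_mul_Lq (volume.restrict Ω) hconj.symm
        hg_meas.aemeasurable hu.enorm
      simp only [Pi.mul_apply] at H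
      refine le_trans H ?_
      rw [eLpNorm_eq_lintegral_rpow_enorm_toReal (by positivity) hptop]
      refine mul_le_mul_left ?_ _
      have h1 : ∀ y : EuclideanSpace ℝ (Fin d),
          (ENNReal.ofReal (Real.exp (-b * dist x y ^ 2 / t))) ^ r'
            = ENNReal.ofReal (Real.exp (-(b * r' / t) * dist x y ^ 2)) := fun y => by
        rw [show (-(b * r' / t) * dist x y ^ 2) = (-b * dist x y ^ 2 / t) * r' by ring,
          Real.exp_mul, ← ENNReal.ofReal_rpow_of_nonneg (Real.exp_pos _).le hr'0.le]
      calc (∫⁻ y in Ω, (ENNReal.ofReal (Real.exp (-b * dist x y ^ 2 / t))) ^ r' ∂volume) ^ (1 / r')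
          ≤ (∫⁻ y, ENNReal.ofReal (Real.exp (-(b * r' / t) * dist x y ^ 2)) ∂volume) ^ (1 / r') := by
            refine ENNReal.rpow_le_rpow ?_ (by positivity)
            simp_rw [h1]
            exact setLIntegral_le_lintegral _ _
        _ = (ENNReal.ofReal ((π / (b * r' / t)) ^ ((d : ℝ) / 2))) ^ (1 / r') := by
            rw [gauss_lint hβ d x]
        _ = ENNReal.ofReal (((π / (b * r' / t)) ^ ((d : ℝ) / 2)) ^ (1 / r')) := by
            rw [ENNReal.ofReal_rpow_of_nonneg (by positivity) (by positivity)]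
        _ ≤ ENNReal.ofReal (M * t ^ ((d : ℝ) / 2 - (d : ℝ) / (2 * r))) := by
            apply ENNReal.ofReal_le_ofReal
            rw [show π / (b * r' / t) = (π / (b * r')) * t by field_simp]
            rw [Real.mul_rpow (by positivity) ht.le,
              Real.mul_rpow (by positivity) (by positivity),
              ← Real.rpow_mul (by positivity : (0:ℝ) ≤ π / (b * r')),
              ← Real.rpow_mul ht.le,
              show (d : ℝ) / 2 * (1 / r') = (d : ℝ) / (2 * r') by ring, hexp_eq]
            exact mul_le_mul_of_nonneg_right (hexp_eq ▸ const_bound hb d hr'1) (by positivity)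


lemma lint_bound (d : ℕ) {b t : ℝ} (hb : 0 < b) (ht : 0 < t)
    {Ω : Set (EuclideanSpace ℝ (Fin d))} (hΩ : MeasurableSet Ω)
    (p : ℝ≥0∞) (hp : 1 ≤ p) {u f : EuclideanSpace ℝ (Fin d) → ℂ}
    (hu : AEStronglyMeasurable u (volume.restrict Ω))
    (x : EuclideanSpace ℝ (Fin d)) {A : ℝ} (hA : 0 ≤ A)
    (hf : ∀ y ∈ Ω, ‖f y‖ ≤ A * Real.exp (-b * dist x y ^ 2 / t)) :
    ∫⁻ y in Ω, ‖f y * u y‖₊ ∂volume ≤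
      ENNReal.ofReal (A * (max 1 ((π / b) ^ ((d : ℝ) / 2)) *
          t ^ ((d : ℝ) / 2 - (d : ℝ) / (2 * p.toReal)))) *
        eLpNorm u p (volume.restrict Ω) := by
  calc ∫⁻ y in Ω, ‖f y * u y‖₊ ∂volume
      ≤ ∫⁻ y in Ω, ENNReal.ofReal A *
          (ENNReal.ofReal (Real.exp (-b * dist x y ^ 2 / t)) * ‖u y‖₊) ∂volume := by
        refine lintegral_mono_ae ((ae_restrict_iff' hΩ).2 (Filter.Eventually.of_forall
          fun y hy => ?_))
        rw [nnnorm_mul, ENNReal.coe_mul, ← mul_assoc, ← ENNReal.ofReal_mul hA]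
        refine mul_le_mul_left ?_ _
        rw [← enorm_eq_nnnorm, ← ofReal_norm]
        exact ENNReal.ofReal_le_ofReal (hf y hy)
    _ = ENNReal.ofReal A *
          ∫⁻ y in Ω, ENNReal.ofReal (Real.exp (-b * dist x y ^ 2 / t)) * ‖u y‖₊ ∂volume :=
        lintegral_const_mul' _ _ ENNReal.ofReal_ne_top
    _ ≤ ENNReal.ofReal A * (ENNReal.ofReal (max 1 ((π / b) ^ ((d : ℝ) / 2)) *
          t ^ ((d : ℝ) / 2 - (d : ℝ) / (2 * p.toReal))) * eLpNorm u p (volume.restrict Ω)) :=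
        mul_le_mul_right (key_lemma d hb ht Ω p hp hu x) _
    _ = _ := by rw [← mul_assoc, ← ENNReal.ofReal_mul hA]

/-- Hölder–Gaussian kernel bounds imply `L_p → C^ν` bounds (content of the
proof of Theorem 4.1(e)): if `|K(x,y)| ≤ a t^{−d/2} e^{−b|x−y|²/t}` and
`|K(x+h,y) − K(x,y)| ≤ a t^{−d/2} (|h|/√t)^κ e^{−b|x−y|²/t}` for `|h| ≤ √t`,
then for `ν ∈ (0,κ]`, `p ∈ [1,∞]` and `u ∈ L_p(Ω)` the function
`(Tu)(x) = ∫_Ω K(x,y) u(y) dy` satisfies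
`|(Tu)(x) − (Tu)(x')| ≤ c t^{−d/(2p)} t^{−ν/2} |x−x'|^ν ‖u‖_{L_p(Ω)}`,
with `c` depending only on `a`, `b`, `d` and `κ`. -/
theorem holder_gaussian_bound_Lp_Holder (d : ℕ) (hd : 1 ≤ d) (κ a b : ℝ)
    (hκ : κ ∈ Set.Ioo (0 : ℝ) 1) (ha : 0 < a) (hb : 0 < b) :
    ∃ c : ℝ, 0 < c ∧
      ∀ (Ω : Set (EuclideanSpace ℝ (Fin d))), MeasurableSet Ω →
      ∀ t : ℝ, 0 < t →
      ∀ K : EuclideanSpace ℝ (Fin d) → EuclideanSpace ℝ (Fin d) → ℂ,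
        Measurable (Function.uncurry K) →
        (∀ x ∈ Ω, ∀ y ∈ Ω,
          ‖K x y‖ ≤ a * t ^ (-(d : ℝ) / 2) * Real.exp (-b * dist x y ^ 2 / t)) →
        (∀ x ∈ Ω, ∀ y ∈ Ω, ∀ h : EuclideanSpace ℝ (Fin d),
          x + h ∈ Ω → ‖h‖ ≤ Real.sqrt t →
          ‖K (x + h) y - K x y‖ ≤
            a * t ^ (-(d : ℝ) / 2) * (‖h‖ / Real.sqrt t) ^ κ *
              Real.exp (-b * dist x y ^ 2 / t)) →
      ∀ ν : ℝ, ν ∈ Set.Ioc (0 : ℝ) κ →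
      ∀ p : ℝ≥0∞, 1 ≤ p →
      ∀ u : EuclideanSpace ℝ (Fin d) → ℂ, MemLp u p (volume.restrict Ω) →
      ∀ x ∈ Ω, ∀ x' ∈ Ω,
        ‖(∫ y in Ω, K x y * u y) - ∫ y in Ω, K x' y * u y‖ ≤
          c * t ^ (-((d : ℝ) / (2 * p.toReal))) * t ^ (-ν / 2) *
            dist x x' ^ ν * (eLpNorm u p (volume.restrict Ω)).toReal := by
  set M : ℝ := max 1 ((π / b) ^ ((d : ℝ) / 2)) with hMdef
  have hM1 : (1 : ℝ) ≤ M := le_max_left _ _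
  have hM0 : (0 : ℝ) < M := lt_of_lt_of_le one_pos hM1
  refine ⟨2 * a * M, by positivity, ?_⟩
  intro Ω hΩ t ht K hK hK1 hK2 ν hν p hp u hu x hx x' hx'
  have hsqrt : 0 < Real.sqrt t := Real.sqrt_pos.2 ht
  set e : ℝ := (d : ℝ) / (2 * p.toReal) with hedef
  set Nu : ℝ := (eLpNorm u p (volume.restrict Ω)).toReal with hNudef
  have hNu0 : 0 ≤ Nu := ENNReal.toReal_nonneg
  have hfin : eLpNorm u p (volume.restrict Ω) ≠ ⊤ := hu.2.ne
  have hCeq : ∀ B : ℝ, 0 ≤ B →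
      B * (a * t ^ (-(d : ℝ) / 2)) * (M * t ^ ((d : ℝ) / 2 - e)) = B * (a * M * t ^ (-e)) := by
    intro B hB
    have h2 : t ^ (-(d : ℝ) / 2) * t ^ ((d : ℝ) / 2 - e) = t ^ (-e) := by
      rw [← Real.rpow_add ht]; congr 1; ring
    calc B * (a * t ^ (-(d : ℝ) / 2)) * (M * t ^ ((d : ℝ) / 2 - e))
        = B * a * M * (t ^ (-(d : ℝ) / 2) * t ^ ((d : ℝ) / 2 - e)) := by ring
      _ = B * (a * M * t ^ (-e)) := by rw [h2]; ring
  -- generic bound on integrals against u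
  have hgen : ∀ (z : EuclideanSpace ℝ (Fin d)) (f : EuclideanSpace ℝ (Fin d) → ℂ) (A : ℝ),
      0 ≤ A →
      (∀ y ∈ Ω, ‖f y‖ ≤ A * Real.exp (-b * dist z y ^ 2 / t)) →
      ‖∫ y in Ω, f y * u y‖ ≤ A * (M * t ^ ((d : ℝ) / 2 - e)) * Nu := by
    intro z f A hA hf
    have h1 := norm_integral_le_lintegral_norm (μ := volume.restrict Ω)
      (f := fun y => f y * u y)
    refine le_trans h1 ?_
    have h2 : (∫⁻ y in Ω, ENNReal.ofReal ‖f y * u y‖ ∂volume)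
        ≤ ENNReal.ofReal (A * (M * t ^ ((d : ℝ) / 2 - e))) * eLpNorm u p (volume.restrict Ω) := by
      simp_rw [ofReal_norm]
      exact lint_bound d hb ht hΩ p hp hu.1 z hA hf
    refine le_trans (ENNReal.toReal_mono (ENNReal.mul_ne_top ENNReal.ofReal_ne_top hfin) h2) ?_
    rw [ENNReal.toReal_mul, ENNReal.toReal_ofReal (by positivity)]
  -- size bound
  have hsize : ∀ z ∈ Ω, ‖∫ y in Ω, K z y * u y‖ ≤ a * M * t ^ (-e) * Nu := by
    intro z hz
    have h4 := hgen z (fun y => K z y) (a * t ^ (-(d : ℝ) / 2)) (by positivity)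
      (fun y hy => hK1 z hz y hy)
    refine le_trans h4 ?_
    have h5 := hCeq 1 zero_le_one
    simp only [one_mul] at h5
    rw [← h5]
  -- trivial case x = x'
  rcases eq_or_ne x x' with rfl | hne
  · simp [Real.zero_rpow (ne_of_gt hν.1)]
  have hδpos : 0 < dist x x' := dist_pos.2 hne
  set δ : ℝ := dist x x' with hδdef
  have hsqν : Real.sqrt t ^ ν = t ^ (ν / 2) := by
    rw [Real.sqrt_eq_rpow, ← Real.rpow_mul ht.le]
    congr 1; ring
  by_cases hcase : Real.sqrt t < δ
  · -- far apart
    have h1 : (1 : ℝ) ≤ t ^ (-ν / 2) * δ ^ ν := by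
      have hsq : t ^ (ν / 2) ≤ δ ^ ν := by
        rw [← hsqν]
        exact Real.rpow_le_rpow (Real.sqrt_nonneg t) hcase.le hν.1.le
      have h2 : t ^ (-ν / 2) * t ^ (ν / 2) = 1 := by
        rw [← Real.rpow_add ht, show -ν / 2 + ν / 2 = 0 by ring, Real.rpow_zero]
      calc (1 : ℝ) = t ^ (-ν / 2) * t ^ (ν / 2) := h2.symm
        _ ≤ t ^ (-ν / 2) * δ ^ ν := by
            exact mul_le_mul_of_nonneg_left hsq (Real.rpow_nonneg ht.le _)
    calc ‖(∫ y in Ω, K x y * u y) - ∫ y in Ω, K x' y * u y‖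
        ≤ ‖∫ y in Ω, K x y * u y‖ + ‖∫ y in Ω, K x' y * u y‖ := norm_sub_le _ _
      _ ≤ a * M * t ^ (-e) * Nu + a * M * t ^ (-e) * Nu :=
          add_le_add (hsize x hx) (hsize x' hx')
      _ = 2 * a * M * t ^ (-e) * Nu * 1 := by ring
      _ ≤ 2 * a * M * t ^ (-e) * Nu * (t ^ (-ν / 2) * δ ^ ν) := by
          refine mul_le_mul_of_nonneg_left h1 ?_
          positivity
      _ = 2 * a * M * t ^ (-e) * t ^ (-ν / 2) * δ ^ ν * Nu := by ring
  · -- close together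
    push_neg at hcase
    set h : EuclideanSpace ℝ (Fin d) := x' - x with hhdef
    have hxh : x + h = x' := by rw [hhdef]; abel
    have hnorm : ‖h‖ = δ := by rw [hhdef, ← dist_eq_norm, dist_comm]
    have hfb : ∀ y ∈ Ω, ‖K x y - K x' y‖ ≤
        (a * t ^ (-(d : ℝ) / 2) * (δ / Real.sqrt t) ^ κ) * Real.exp (-b * dist x y ^ 2 / t) := by
      intro y hy
      rw [norm_sub_rev]
      have h6 := hK2 x hx y hy h (by rw [hxh]; exact hx') (by rw [hnorm]; exact hcase)
      rw [hxh, hnorm] at h6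
      exact h6
    have hint : ∀ z ∈ Ω, Integrable (fun y => K z y * u y) (volume.restrict Ω) := by
      intro z hz
      have hmeasz : Measurable fun y => K z y := hK.comp measurable_prodMk_left
      refine ⟨hmeasz.aestronglyMeasurable.mul hu.1, ?_⟩
      show (∫⁻ y in Ω, ‖K z y * u y‖₊ ∂volume) < ⊤
      refine lt_of_le_of_lt (lint_bound d hb ht hΩ p hp hu.1 z
        (A := a * t ^ (-(d : ℝ) / 2)) (by positivity) (fun y hy => hK1 z hz y hy)) ?_
      exact ENNReal.mul_lt_top ENNReal.ofReal_lt_top hfin.lt_top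
    rw [← integral_sub (hint x hx) (hint x' hx')]
    simp_rw [← sub_mul]
    have h7 := hgen x (fun y => K x y - K x' y)
      (a * t ^ (-(d : ℝ) / 2) * (δ / Real.sqrt t) ^ κ) (by positivity) hfb
    refine le_trans h7 ?_
    -- algebra
    have h8 : (δ / Real.sqrt t) ^ κ ≤ (δ / Real.sqrt t) ^ ν :=
      Real.rpow_le_rpow_of_exponent_ge (div_pos hδpos hsqrt)
        ((div_le_one hsqrt).2 hcase) hν.2
    have h9 : (δ / Real.sqrt t) ^ ν = t ^ (-ν / 2) * δ ^ ν := by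
      rw [Real.div_rpow dist_nonneg (Real.sqrt_nonneg t), hsqν, div_eq_mul_inv,
        ← Real.rpow_neg ht.le]
      rw [show -(ν / 2) = -ν / 2 by ring]
      ring
    have h10 : a * t ^ (-(d : ℝ) / 2) * (δ / Real.sqrt t) ^ κ * (M * t ^ ((d : ℝ) / 2 - e))
        = (δ / Real.sqrt t) ^ κ * (a * M * t ^ (-e)) := by
      have := hCeq ((δ / Real.sqrt t) ^ κ) (by positivity)
      calc a * t ^ (-(d : ℝ) / 2) * (δ / Real.sqrt t) ^ κ * (M * t ^ ((d : ℝ) / 2 - e))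
          = (δ / Real.sqrt t) ^ κ * (a * t ^ (-(d : ℝ) / 2)) * (M * t ^ ((d : ℝ) / 2 - e)) := by
            ring
        _ = (δ / Real.sqrt t) ^ κ * (a * M * t ^ (-e)) := this
    rw [h10]
    calc (δ / Real.sqrt t) ^ κ * (a * M * t ^ (-e)) * Nu
        ≤ (δ / Real.sqrt t) ^ ν * (a * M * t ^ (-e)) * Nu := by
          refine mul_le_mul_of_nonneg_right (mul_le_mul_of_nonneg_right h8 (by positivity)) hNu0
      _ = t ^ (-ν / 2) * δ ^ ν * (a * M * t ^ (-e)) * Nu := by rw [h9]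
      _ ≤ t ^ (-ν / 2) * δ ^ ν * (2 * a * M * t ^ (-e)) * Nu := by
          refine mul_le_mul_of_nonneg_right (mul_le_mul_of_nonneg_left ?_ (by positivity)) hNu0
          nlinarith [mul_pos (mul_pos ha hM0) (Real.rpow_pos_of_pos ht (-e))]
      _ = 2 * a * M * t ^ (-e) * t ^ (-ν / 2) * δ ^ ν * Nu := by ring
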